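/- Let a, b, c, d be integers with a ≠ 0, b ≠ 0, and gcd(gcd(a, b), c) = 1. Set δ = gcd(a, b). Let (x₁, y₁) be integers with (a/δ)*x₁ + (b/δ)*y₁ = 1, and let (t₁, z₁) be integers with δ*t₁ + c*z₁ = d. Then a triple of integers (x, y, z) satisfies a*x + b*y + c*z = d if and only if there exist integers m, n such that x = (t₁ - c*m)*x₁ - (b/δ)*n, y = (t₁ - c*m)*y₁ + (a/δ)*n, and z = z₁ + δ*m. -/

import Mathlib

theorem formula3 (a b c d : ℤ) (ha : a ≠ 0) (hb : b ≠ 0)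
    (habc : Int.gcd (Int.gcd a b : ℤ) c = 1)
    (x₁ y₁ t₁ z₁ : ℤ)
    (h₁ : (a / (Int.gcd a b : ℤ)) * x₁ + (b / (Int.gcd a b : ℤ)) * y₁ = 1)
    (h₂ : (Int.gcd a b : ℤ) * t₁ + c * z₁ = d) (x y z : ℤ) :
    a * x + b * y + c * z = d ↔
      ∃ m n : ℤ,
        x = (t₁ - c * m) * x₁ - (b / (Int.gcd a b : ℤ)) * n ∧
        y = (t₁ - c * m) * y₁ + (a / (Int.gcd a b : ℤ)) * n ∧
        z = z₁ + (Int.gcd a b : ℤ) * m := by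
  set δ : ℤ := (Int.gcd a b : ℤ) with hδdef
  have hδ0 : δ ≠ 0 := by
    simp [hδdef, Int.gcd_eq_zero_iff, ha, hb]
  have hda : δ * (a / δ) = a := Int.mul_ediv_cancel' (Int.gcd_dvd_left a b)
  have hdb : δ * (b / δ) = b := Int.mul_ediv_cancel' (Int.gcd_dvd_right a b)
  set a' := a / δ
  set b' := b / δ
  constructor
  · intro h
    -- c * (z - z₁) = δ * (t₁ - a'*x - b'*y)
    have key : c * (z - z₁) = δ * (t₁ - a' * x - b' * y) := by
      have : δ * a' * x + δ * b' * y + c * z = δ * t₁ + c * z₁ := by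
        rw [hda, hdb, h, h₂]
      ring_nf
      ring_nf at this
      linarith
    have hcop : IsCoprime δ c := Int.isCoprime_iff_gcd_eq_one.mpr habc
    have hdvd : δ ∣ z - z₁ := hcop.dvd_of_dvd_mul_left ⟨_, key⟩
    obtain ⟨m, hm⟩ := hdvd
    have hzm : z = z₁ + δ * m := by linarith
    have hT : a' * x + b' * y = t₁ - c * m := by
      have : δ * (c * m) = δ * (t₁ - a' * x - b' * y) := by
        rw [← key, hm]; ring
      have := mul_left_cancel₀ hδ0 this
      linarith
    have hcop' : IsCoprime a' b' := ⟨x₁, y₁, by linarith [h₁]⟩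
    have hb' : b' ≠ 0 := by
      intro h0
      apply hb; rw [← hdb, h0, mul_zero]
    have heq : b' * ((t₁ - c * m) * y₁ - y) = a' * (x - (t₁ - c * m) * x₁) := by
      linear_combination (t₁ - c * m) * h₁ - hT
    have hdvd2 : b' ∣ x - (t₁ - c * m) * x₁ := by
      have : b' ∣ a' * (x - (t₁ - c * m) * x₁) := ⟨_, heq.symm⟩
      exact (hcop'.symm.dvd_of_dvd_mul_left this)
    obtain ⟨n, hn⟩ := hdvd2
    refine ⟨m, -n, ?_, ?_, hzm⟩
    · linarith
    · have : b' * ((t₁ - c * m) * y₁ - y) = b' * (a' * n) := by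
        rw [heq, hn]; ring
      have := mul_left_cancel₀ hb' this
      linarith
  · rintro ⟨m, n, hx, hy, hz⟩
    subst hx hy hz
    have h1' : δ * (a' * x₁ + b' * y₁) = δ * 1 := by rw [h₁]
    rw [← hda, ← hdb]; linear_combination δ * (t₁ - c * m) * h₁ + h₂
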